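/- For every integer m ≥ 2, the generating function identity ∑_{n≥0} C_m(n) q^n = ∑_{n≥0} (q^m; q^m)_n · q^{mn} / (q; q)_{mn} holds as formal power series, where C_m(n) is the number of partitions of n whose largest part is divisible by m, say m·j, and all parts ≤ j occur fewer than m times (with C_m(0) = 1). -/

import Mathlib

open PowerSeries

noncomputable instance : TopologicalSpace (PowerSeries ℂ) :=
  inferInstanceAs (TopologicalSpace ((Unit →₀ ℕ) → ℂ))

/-- The formal variable `q`. -/
noncomputable def q : PowerSeries ℂ := PowerSeries.X

/-- Finite q-Pochhammer symbol `(a; b)_n = ∏_{i=0}^{n-1} (1 - a bⁱ)`. -/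
noncomputable def poch (a b : PowerSeries ℂ) (n : ℕ) : PowerSeries ℂ :=
  ∏ i ∈ Finset.range n, (1 - a * b ^ i)

/-- Infinite q-Pochhammer symbol `(a; b)_∞ = ∏_{i≥0} (1 - a bⁱ)`. -/
noncomputable def pochInf (a b : PowerSeries ℂ) : PowerSeries ℂ :=
  ∏' i : ℕ, (1 - a * b ^ i)

/-- `Cm m n`: number of partitions of `n` whose largest part is divisible by `m`,
say `m*j`, with all parts `≤ j` occurring fewer than `m` times; `Cm m 0 = 1`. -/
noncomputable def Cm (m n : ℕ) : ℕ :=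
  if n = 0 then 1 else
  Nat.card {s : Multiset ℕ // s.sum = n ∧ (∀ a ∈ s, 0 < a) ∧
    ∃ j : ℕ, m * j ∈ s ∧ (∀ b ∈ s, b ≤ m * j) ∧ ∀ b ∈ s, b ≤ j → s.count b < m}

noncomputable instance : T2Space (PowerSeries ℂ) :=
  inferInstanceAs (T2Space ((Unit →₀ ℕ) → ℂ))

noncomputable def Gi (i : ℕ) : PowerSeries ℂ := PowerSeries.mk fun k => if i ∣ k then 1 else 0

theorem Gi_inv (i : ℕ) (hi : 0 < i) : (1 - q^i) * Gi i = 1 := by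
  ext n
  rw [sub_mul, one_mul, map_sub, q, PowerSeries.coeff_X_pow_mul']
  simp only [Gi, PowerSeries.coeff_mk, PowerSeries.coeff_one]
  rcases lt_or_ge n i with h | h
  · rw [if_neg (not_le.mpr h)]
    rcases Nat.eq_zero_or_pos n with rfl | hn
    · simp
    · have h3 : ¬ i ∣ n := fun hd => absurd (Nat.le_of_dvd hn hd) (not_le.mpr h)
      simp only [if_neg h3, if_neg (by omega : ¬ n = 0)]; ring
  · rw [if_pos h]
    have h2 : (i ∣ n) ↔ (i ∣ n - i) := by
      constructor
      · exact fun hd => Nat.dvd_sub hd dvd_rfl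
      · intro hd; have := Nat.dvd_add hd (dvd_refl i); rwa [Nat.sub_add_cancel h] at this
    have hn0 : ¬ n = 0 := by omega
    by_cases hd : i ∣ n
    · simp only [if_pos hd, if_pos (h2.mp hd), if_neg hn0]; ring
    · simp only [if_neg hd, if_neg (fun hh => hd (h2.mpr hh) : ¬ i ∣ n - i), if_neg hn0]; ring

noncomputable def Ei (m i : ℕ) : PowerSeries ℂ := ∑ c ∈ Finset.range m, q ^ (c * i)

theorem Ei_mul (m i : ℕ) : (1 - q^i) * Ei m i = 1 - q^(m*i) := by
  have h : Ei m i = ∑ c ∈ Finset.range m, (q^i)^c := by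
    apply Finset.sum_congr rfl; intro c _; rw [← pow_mul, mul_comm]
  have hg := geom_sum_mul (q^i) m
  rw [h, ← pow_mul, mul_comm i m] at *
  linear_combination -hg

theorem coeff_Ei (m i : ℕ) (hi : 0 < i) (k : ℕ) :
    (PowerSeries.coeff k) (Ei m i) = if i ∣ k ∧ k < m*i then 1 else 0 := by
  rw [Ei, map_sum]
  simp only [q, PowerSeries.coeff_X_pow]
  by_cases hc : i ∣ k ∧ k < m * i
  · rw [if_pos hc]
    obtain ⟨⟨c, rfl⟩, hlt⟩ := hc
    rw [Finset.sum_eq_single c]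
    · simp [mul_comm]
    · intro b _ hb; rw [if_neg]; intro hh
      have h5 : i * c = i * b := by rw [hh, mul_comm]
      exact hb (Nat.eq_of_mul_eq_mul_left hi h5).symm
    · intro hcm; exfalso; apply hcm; rw [Finset.mem_range]
      by_contra hcm'; push_neg at hcm'; nlinarith
  · rw [if_neg hc]
    apply Finset.sum_eq_zero
    intro c hcm; rw [Finset.mem_range] at hcm
    rw [if_neg]; intro rfl_eq
    exact hc ⟨⟨c, by rw [rfl_eq, mul_comm]⟩, by nlinarith⟩

theorem prodIoc {M : Type*} [CommMonoid M] (f : ℕ → M) (k : ℕ) :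
    ∏ i ∈ Finset.range k, f (i+1) = ∏ i ∈ Finset.Ioc 0 k, f i := by
  induction k with
  | zero => simp
  | succ k ih => rw [Finset.prod_range_succ, ih, Finset.prod_Ioc_succ_top (Nat.zero_le k)]

theorem poch_q_eq (k : ℕ) : poch q q k = ∏ i ∈ Finset.Ioc 0 k, (1 - q^i) := by
  rw [poch, ← prodIoc (fun i => 1 - q^i) k]
  exact Finset.prod_congr rfl fun i _ => by rw [← pow_succ']

theorem poch_qm_eq (m n : ℕ) : poch (q^m) (q^m) n = ∏ i ∈ Finset.Ioc 0 n, (1 - q^(m*i)) := by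
  rw [poch, ← prodIoc (fun i => 1 - q^(m*i)) n]
  exact Finset.prod_congr rfl fun i _ => by
    rw [← pow_mul, ← pow_add, show m + m*i = m*(i+1) by ring]

theorem constCoeff_poch (k : ℕ) : PowerSeries.constantCoeff (poch q q k) = 1 := by
  rw [poch, map_prod]
  apply Finset.prod_eq_one
  intro i _
  simp [q, PowerSeries.constantCoeff_X, zero_pow]

theorem key_prod (m n : ℕ) (hm : 2 ≤ m) (hn : 1 ≤ n) :
    poch q q (m*n) * (q^(m*n) * ((∏ i ∈ Finset.Ioc 0 n, Ei m i) * ∏ i ∈ Finset.Ioc n (m*n), Gi i))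
    = poch (q^m) (q^m) n * q^(m*n) := by
  have hnm : n ≤ m * n := Nat.le_mul_of_pos_left n (by omega)
  rw [poch_q_eq, poch_qm_eq, ← Finset.prod_Ioc_consecutive _ (Nat.zero_le n) hnm]
  have h1 : (∏ i ∈ Finset.Ioc 0 n, (1 - q^i)) * (∏ i ∈ Finset.Ioc 0 n, Ei m i)
      = ∏ i ∈ Finset.Ioc 0 n, (1 - q^(m*i)) := by
    rw [← Finset.prod_mul_distrib]
    exact Finset.prod_congr rfl fun i _ => Ei_mul m i
  have h2 : (∏ i ∈ Finset.Ioc n (m*n), (1 - q^i)) * (∏ i ∈ Finset.Ioc n (m*n), Gi i) = 1 := by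
    rw [← Finset.prod_mul_distrib]
    apply Finset.prod_eq_one
    intro i hi
    exact Gi_inv i (by simp only [Finset.mem_Ioc] at hi; omega)
  calc (∏ i ∈ Finset.Ioc 0 n, (1 - q^i)) * (∏ i ∈ Finset.Ioc n (m*n), (1 - q^i)) *
        (q^(m*n) * ((∏ i ∈ Finset.Ioc 0 n, Ei m i) * ∏ i ∈ Finset.Ioc n (m*n), Gi i))
      = ((∏ i ∈ Finset.Ioc 0 n, (1 - q^i)) * (∏ i ∈ Finset.Ioc 0 n, Ei m i)) *
        ((∏ i ∈ Finset.Ioc n (m*n), (1 - q^i)) * (∏ i ∈ Finset.Ioc n (m*n), Gi i)) * q^(m*n) := by ring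
    _ = _ := by rw [h1, h2, mul_one]

noncomputable def Fi (m n i : ℕ) : PowerSeries ℂ :=
  PowerSeries.mk fun k => if i ∣ k ∧ (i ≤ n → k < m*i) ∧ (i = m*n → m*n ≤ k) then 1 else 0

theorem Fi_eq_Ei (m n i : ℕ) (hm : 2 ≤ m) (hn : 1 ≤ n) (h1 : 0 < i) (h2 : i ≤ n) :
    Fi m n i = Ei m i := by
  ext k
  rw [Fi, PowerSeries.coeff_mk, coeff_Ei m i h1]
  have hne : i ≠ m * n := by nlinarith
  by_cases hc : i ∣ k ∧ k < m * i
  · rw [if_pos ⟨hc.1, fun _ => hc.2, fun h => absurd h hne⟩, if_pos hc]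
  · rw [if_neg, if_neg hc]
    rintro ⟨ha, hb, -⟩; exact hc ⟨ha, hb h2⟩

theorem Fi_eq_Gi (m n i : ℕ) (h1 : n < i) (h2 : i ≠ m*n) : Fi m n i = Gi i := by
  ext k
  rw [Fi, PowerSeries.coeff_mk, Gi, PowerSeries.coeff_mk]
  by_cases hc : i ∣ k
  · rw [if_pos ⟨hc, fun h => absurd h (by omega), fun h => absurd h h2⟩, if_pos hc]
  · rw [if_neg (fun h => hc h.1), if_neg hc]

theorem Fi_top (m n : ℕ) (hm : 2 ≤ m) (hn : 1 ≤ n) :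
    Fi m n (m*n) = q^(m*n) * Gi (m*n) := by
  have hmn : 0 < m * n := by positivity
  ext k
  rw [Fi, PowerSeries.coeff_mk, q, PowerSeries.coeff_X_pow_mul', Gi]
  rcases lt_or_ge k (m*n) with h | h
  · rw [if_neg (not_le.mpr h), if_neg]
    rintro ⟨hd, -, hh⟩
    exact absurd (hh rfl) (not_le.mpr h)
  · rw [if_pos h, PowerSeries.coeff_mk]
    have h3 : ¬ (m*n ≤ n) := by nlinarith
    have h2 : (m*n ∣ k) ↔ (m*n ∣ k - m*n) := by
      constructor
      · exact fun hd => Nat.dvd_sub hd dvd_rfl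
      · intro hd; have := Nat.dvd_add hd (dvd_refl (m*n)); rwa [Nat.sub_add_cancel h] at this
    by_cases hd : m*n ∣ k
    · rw [if_pos (h2.mp hd), if_pos ⟨hd, fun hc => absurd hc h3, fun _ => h⟩]
    · rw [if_neg (fun hh => hd (h2.mpr hh)), if_neg (fun hh => hd hh.1)]

theorem prodF (m n : ℕ) (hm : 2 ≤ m) (hn : 1 ≤ n) :
    q^(m*n) * ((∏ i ∈ Finset.Ioc 0 n, Ei m i) * ∏ i ∈ Finset.Ioc n (m*n), Gi i)
    = ∏ i ∈ Finset.Ioc 0 (m*n), Fi m n i := by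
  have hlt : n < m * n := by nlinarith
  have e1 : m * n = (m*n - 1) + 1 := by omega
  rw [← Finset.prod_Ioc_consecutive _ (Nat.zero_le n) (le_of_lt hlt)]
  have e2 : ∏ i ∈ Finset.Ioc n (m*n), Fi m n i
      = (∏ i ∈ Finset.Ioc n (m*n - 1), Fi m n i) * Fi m n (m*n) := by
    rw [e1, Finset.prod_Ioc_succ_top (by omega), ← e1]
  have e3 : ∏ i ∈ Finset.Ioc n (m*n), Gi i
      = (∏ i ∈ Finset.Ioc n (m*n - 1), Gi i) * Gi (m*n) := by
    rw [e1, Finset.prod_Ioc_succ_top (by omega), ← e1]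
  have e4 : ∏ i ∈ Finset.Ioc n (m*n - 1), Fi m n i = ∏ i ∈ Finset.Ioc n (m*n - 1), Gi i := by
    apply Finset.prod_congr rfl
    intro i hi
    rw [Finset.mem_Ioc] at hi
    exact Fi_eq_Gi m n i hi.1 (by omega)
  have e5 : ∏ i ∈ Finset.Ioc 0 n, Fi m n i = ∏ i ∈ Finset.Ioc 0 n, Ei m i := by
    apply Finset.prod_congr rfl
    intro i hi
    rw [Finset.mem_Ioc] at hi
    exact Fi_eq_Ei m n i hm hn hi.1 hi.2
  rw [e2, e3, e4, e5, Fi_top m n hm hn]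
  ring

noncomputable def Kf (m n d : ℕ) : Finset (ℕ →₀ ℕ) :=
  (Finset.finsuppAntidiag (Finset.Ioc 0 (m*n)) d).filter
    (fun l => ∀ i ∈ Finset.Ioc 0 (m*n), i ∣ l i ∧ (i ≤ n → l i < m*i) ∧ (i = m*n → m*n ≤ l i))

theorem coeff_prodF (m n d : ℕ) :
    (PowerSeries.coeff d) (∏ i ∈ Finset.Ioc 0 (m*n), Fi m n i) = ((Kf m n d).card : ℂ) := by
  rw [PowerSeries.coeff_prod]
  have h1 : ∀ l ∈ Finset.finsuppAntidiag (Finset.Ioc 0 (m*n)) d,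
      (∏ i ∈ Finset.Ioc 0 (m*n), (PowerSeries.coeff (l i)) (Fi m n i))
      = if (∀ i ∈ Finset.Ioc 0 (m*n), i ∣ l i ∧ (i ≤ n → l i < m*i) ∧ (i = m*n → m*n ≤ l i))
        then (1:ℂ) else 0 := by
    intro l _
    simp only [Fi, PowerSeries.coeff_mk]
    rw [Finset.prod_boole]
  rw [Finset.sum_congr rfl h1, Finset.sum_boole, Kf]

theorem term_eq (m n : ℕ) (hm : 2 ≤ m) (hn : 1 ≤ n) :
    poch (q^m) (q^m) n * q^(m*n) * (poch q q (m*n))⁻¹ = ∏ i ∈ Finset.Ioc 0 (m*n), Fi m n i := by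
  rw [← key_prod m n hm hn]
  have hc : PowerSeries.constantCoeff (poch q q (m*n)) ≠ 0 := by
    rw [constCoeff_poch]; exact one_ne_zero
  calc poch q q (m*n) * (q^(m*n) * ((∏ i ∈ Finset.Ioc 0 n, Ei m i) * ∏ i ∈ Finset.Ioc n (m*n), Gi i))
        * (poch q q (m*n))⁻¹
      = (q^(m*n) * ((∏ i ∈ Finset.Ioc 0 n, Ei m i) * ∏ i ∈ Finset.Ioc n (m*n), Gi i))
        * (poch q q (m*n) * (poch q q (m*n))⁻¹) := by ring
    _ = _ := by rw [PowerSeries.mul_inv_cancel _ hc, mul_one, prodF m n hm hn]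

theorem coeff_term (m n d : ℕ) (hm : 2 ≤ m) (hn : 1 ≤ n) :
    (PowerSeries.coeff d) (poch (q ^ m) (q ^ m) n * q ^ (m * n) * (poch q q (m * n))⁻¹)
    = ((Kf m n d).card : ℂ) := by
  rw [term_eq m n hm hn, coeff_prodF]

theorem sum_count_mul (s : Multiset ℕ) : ∑ i ∈ s.toFinset, i * s.count i = s.sum := by
  conv_rhs => rw [← Multiset.toFinset_sum_count_nsmul_eq s]
  rw [← Multiset.coe_sumAddMonoidHom, map_sum]
  apply Finset.sum_congr rfl
  intro i _
  rw [Multiset.coe_sumAddMonoidHom, Multiset.nsmul_singleton, Multiset.sum_replicate,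
    smul_eq_mul, mul_comm]

theorem mem_le_sum {s : Multiset ℕ} {a : ℕ} (h : a ∈ s) : a ≤ s.sum := by
  obtain ⟨t, rfl⟩ := Multiset.exists_cons_of_mem h
  rw [Multiset.sum_cons]; omega

section
variable (m n d : ℕ)

noncomputable def Phi (s : Multiset ℕ) : ℕ →₀ ℕ :=
  Finsupp.onFinset s.toFinset (fun i => i * s.count i)
    (fun i h => Multiset.mem_toFinset.mpr (by
      by_contra hc
      rw [Multiset.count_eq_zero_of_notMem hc, mul_zero] at h
      exact h rfl))

noncomputable def Psi (l : ℕ →₀ ℕ) : Multiset ℕ :=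
  ∑ i ∈ Finset.Ioc 0 (m*n), (l i / i) • ({i} : Multiset ℕ)

theorem count_Psi (l : ℕ →₀ ℕ) (b : ℕ) :
    (Psi m n l).count b = if b ∈ Finset.Ioc 0 (m*n) then l b / b else 0 := by
  rw [Psi, Multiset.count_sum']
  have : ∀ i ∈ Finset.Ioc 0 (m*n), Multiset.count b ((l i / i) • ({i} : Multiset ℕ))
      = if i = b then l b / b else 0 := by
    intro i _
    rw [Multiset.count_nsmul, Multiset.count_singleton]
    by_cases h : b = i
    · subst h; simp
    · rw [if_neg h, if_neg (fun hh => h hh.symm), mul_zero]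
  rw [Finset.sum_congr rfl this, Finset.sum_ite_eq']

theorem fiber_card (hm : 2 ≤ m) (hn : 1 ≤ n) (T : Finset (Multiset ℕ))
    (hT : ∀ s, s ∈ T ↔ (s.sum = d ∧ (∀ b ∈ s, 0 < b ∧ b ≤ m*n) ∧ m*n ∈ s ∧
      (∀ b ∈ s, b ≤ n → s.count b < m))) :
    T.card = (Kf m n d).card := by
  have hm0 : 0 < m := by omega
  have hmn : 0 < m * n := by positivity
  apply Finset.card_bij' (fun s _ => Phi s) (fun l _ => Psi m n l)
  · -- Phi s ∈ Kf
    intro s hs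
    rw [hT] at hs
    obtain ⟨hsum, hin, hmem, hcount⟩ := hs
    have hsub : s.toFinset ⊆ Finset.Ioc 0 (m*n) := by
      intro b hb
      rw [Multiset.mem_toFinset] at hb
      rw [Finset.mem_Ioc]
      exact ⟨(hin b hb).1, (hin b hb).2⟩
    rw [Kf, Finset.mem_filter, Finset.mem_finsuppAntidiag]
    refine ⟨⟨?_, ?_⟩, ?_⟩
    · -- sum
      have h9 : (Finset.Ioc 0 (m*n)).sum (Phi s) = ∑ i ∈ s.toFinset, (Phi s) i :=
        (Finset.sum_subset hsub (fun i _ hi => by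
          simp only [Phi, Finsupp.onFinset_apply]
          rw [Multiset.count_eq_zero_of_notMem (fun hc => hi (Multiset.mem_toFinset.mpr hc)),
            mul_zero])).symm
      rw [h9, ← hsum, ← sum_count_mul s]
      exact Finset.sum_congr rfl (fun i _ => by simp only [Phi, Finsupp.onFinset_apply])
    · -- support
      exact (Finsupp.support_onFinset_subset).trans hsub
    · intro i hi
      rw [Finset.mem_Ioc] at hi
      simp only [Phi, Finsupp.onFinset_apply]
      refine ⟨dvd_mul_right i _, ?_, ?_⟩
      · intro hin
        by_cases hc : i ∈ s
        · have h8 := hcount i hc hin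
          calc i * s.count i < i * m := mul_lt_mul_of_pos_left h8 hi.1
            _ = m * i := mul_comm i m
        · rw [Multiset.count_eq_zero_of_notMem hc, mul_zero]
          exact Nat.mul_pos hm0 hi.1
      · intro hieq
        subst hieq
        exact Nat.le_mul_of_pos_right _ (Multiset.count_pos.mpr hmem)
  · -- Psi l ∈ T
    intro l hl
    rw [Kf, Finset.mem_filter, Finset.mem_finsuppAntidiag] at hl
    obtain ⟨⟨hsum, hsupp⟩, hP⟩ := hl
    have hmem_iff : ∀ b, b ∈ Psi m n l ↔ (b ∈ Finset.Ioc 0 (m*n) ∧ 0 < l b / b) := by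
      intro b
      rw [← Multiset.count_pos, count_Psi]
      by_cases h : b ∈ Finset.Ioc 0 (m*n)
      · simp [h]
      · simp [h]
    rw [hT]
    refine ⟨?_, ?_, ?_, ?_⟩
    · -- sum
      have : ∀ i ∈ Finset.Ioc 0 (m*n), ((l i / i) • ({i} : Multiset ℕ)).sum = l i := by
        intro i hi
        rw [Finset.mem_Ioc] at hi
        rw [Multiset.nsmul_singleton, Multiset.sum_replicate, smul_eq_mul,
          Nat.div_mul_cancel (hP i (Finset.mem_Ioc.mpr hi)).1]
      rw [Psi, ← Multiset.coe_sumAddMonoidHom, map_sum]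
      simp only [Multiset.coe_sumAddMonoidHom]
      rw [Finset.sum_congr rfl this, hsum]
    · intro b hb
      rw [hmem_iff] at hb
      rw [Finset.mem_Ioc] at hb
      exact ⟨hb.1.1, hb.1.2⟩
    · rw [hmem_iff, Finset.mem_Ioc]
      have := (hP (m*n) (Finset.mem_Ioc.mpr ⟨hmn, le_refl _⟩)).2.2 rfl
      refine ⟨⟨hmn, le_refl _⟩, ?_⟩
      exact (Nat.one_le_div_iff hmn).mpr this
    · intro b hb hbn
      rw [hmem_iff] at hb
      rw [count_Psi, if_pos hb.1]
      have hb0 : 0 < b := (Finset.mem_Ioc.mp hb.1).1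
      have := (hP b hb.1).2.1 hbn
      rw [Nat.div_lt_iff_lt_mul hb0]
      exact this
  · -- left inverse : Psi (Phi s) = s
    intro s hs
    rw [hT] at hs
    obtain ⟨hsum, hin, hmem, hcount⟩ := hs
    ext b
    rw [count_Psi]
    simp only [Phi, Finsupp.onFinset_apply]
    by_cases h : b ∈ Finset.Ioc 0 (m*n)
    · rw [if_pos h]
      rw [Finset.mem_Ioc] at h
      rw [Nat.mul_div_cancel_left _ h.1]
    · rw [if_neg h]
      rw [Finset.mem_Ioc] at h
      push_neg at h
      symm
      rw [Multiset.count_eq_zero]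
      intro hc
      obtain ⟨h1, h2⟩ := hin b hc
      exact absurd (h h1) (not_lt.mpr h2)
  · -- right inverse : Phi (Psi l) = l
    intro l hl
    rw [Kf, Finset.mem_filter, Finset.mem_finsuppAntidiag] at hl
    obtain ⟨⟨hsum, hsupp⟩, hP⟩ := hl
    ext i
    simp only [Phi, Finsupp.onFinset_apply]
    rw [count_Psi]
    by_cases h : i ∈ Finset.Ioc 0 (m*n)
    · rw [if_pos h]
      rw [Nat.mul_div_cancel' (hP i h).1]
    · rw [if_neg h, mul_zero]
      symm
      rw [← Finsupp.notMem_support_iff]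
      exact fun hc => h (hsupp hc)
end

open Classical in
noncomputable def SF (m d : ℕ) : Finset (Multiset ℕ) :=
  (Finset.image (fun p : Nat.Partition d => p.parts) Finset.univ).filter
    (fun s => ∃ j : ℕ, m * j ∈ s ∧ (∀ b ∈ s, b ≤ m * j) ∧ ∀ b ∈ s, b ≤ j → s.count b < m)

open Classical in
theorem mem_SF (m d : ℕ) (s : Multiset ℕ) :
    s ∈ SF m d ↔ (s.sum = d ∧ (∀ a ∈ s, 0 < a) ∧
      ∃ j : ℕ, m * j ∈ s ∧ (∀ b ∈ s, b ≤ m * j) ∧ ∀ b ∈ s, b ≤ j → s.count b < m) := by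
  rw [SF, Finset.mem_filter, Finset.mem_image]
  constructor
  · rintro ⟨⟨p, -, rfl⟩, h2⟩
    exact ⟨p.parts_sum, fun a ha => p.parts_pos ha, h2⟩
  · rintro ⟨h1, h2, h3⟩
    exact ⟨⟨⟨s, fun {a} ha => h2 a ha, h1⟩, Finset.mem_univ _, rfl⟩, h3⟩

theorem Cm_eq_SF_card (m d : ℕ) (hd : d ≠ 0) : Cm m d = (SF m d).card := by
  rw [Cm, if_neg hd, ← Nat.card_eq_finsetCard]
  apply Nat.card_congr
  apply Equiv.subtypeEquivRight
  intro s
  rw [mem_SF]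

-- the unique j for s in SF
theorem supDivM (m d : ℕ) (hm : 2 ≤ m) {s : Multiset ℕ} {j : ℕ}
    (hj : m * j ∈ s) (hle : ∀ b ∈ s, b ≤ m * j) : s.sup = m * j ∧ s.sup / m = j := by
  have h1 : s.sup = m * j :=
    le_antisymm (Multiset.sup_le.mpr hle) (Multiset.le_sup hj)
  exact ⟨h1, by rw [h1, Nat.mul_div_cancel_left _ (by omega : 0 < m)]⟩

theorem SF_fiberwise (m d : ℕ) (hm : 2 ≤ m) :
    (SF m d).card = ∑ n ∈ Finset.range (d+1), ((SF m d).filter (fun s => s.sup / m = n)).card := by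
  apply Finset.card_eq_sum_card_fiberwise
  intro s hs
  simp only [Finset.mem_coe] at hs ⊢
  rw [mem_SF] at hs
  obtain ⟨hsum, hpos, j, hj, hle, -⟩ := hs
  rw [(supDivM m d hm hj hle).2, Finset.mem_range]
  have h2 : m * j ≤ d := hsum ▸ mem_le_sum hj
  have : j ≤ m * j := Nat.le_mul_of_pos_left j (by omega)
  omega

theorem fiber_zero (m d : ℕ) (hm : 2 ≤ m) (hd : d ≠ 0) :
    ((SF m d).filter (fun s => s.sup / m = 0)).card = 0 := by
  rw [Finset.card_eq_zero, Finset.filter_eq_empty_iff]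
  intro s hs
  rw [mem_SF] at hs
  obtain ⟨hsum, hpos, j, hj, hle, -⟩ := hs
  rw [(supDivM m d hm hj hle).2]
  have := hpos _ hj
  rcases Nat.eq_zero_or_pos j with rfl | hjpos
  · simp at this
  · omega

theorem fiber_pos (m n d : ℕ) (hm : 2 ≤ m) (hn : 1 ≤ n) :
    ((SF m d).filter (fun s => s.sup / m = n)).card = (Kf m n d).card := by
  apply fiber_card m n d hm hn
  intro s
  rw [Finset.mem_filter, mem_SF]
  constructor
  · rintro ⟨⟨hsum, hpos, j, hj, hle, hcount⟩, hfib⟩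
    obtain ⟨hsup, hdiv⟩ := supDivM m d hm hj hle
    have hjn : j = n := by rw [hdiv] at hfib; exact hfib
    subst hjn
    exact ⟨hsum, fun b hb => ⟨hpos b hb, hle b hb⟩, hj, hcount⟩
  · rintro ⟨hsum, hin, hmem, hcount⟩
    have hle : ∀ b ∈ s, b ≤ m * n := fun b hb => (hin b hb).2
    exact ⟨⟨hsum, fun b hb => (hin b hb).1, n, hmem, hle, hcount⟩,
      (supDivM m d hm hmem hle).2⟩

theorem Kf_empty_of_big (m n d : ℕ) (hm : 2 ≤ m) (hn : 1 ≤ n) (h : d < m * n) :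
    (Kf m n d).card = 0 := by
  rw [Finset.card_eq_zero, Kf, Finset.filter_eq_empty_iff]
  intro l hl
  rw [Finset.mem_finsuppAntidiag] at hl
  intro hP
  have hmn : m * n ∈ Finset.Ioc 0 (m*n) := by
    rw [Finset.mem_Ioc]; constructor; positivity; rfl
  have h1 := (hP (m*n) hmn).2.2 rfl
  have h2 : l (m*n) ≤ d := by
    rw [← hl.1]
    exact Finset.single_le_sum (fun i _ => Nat.zero_le _) hmn
  omega

theorem Cm_eq_sum_Kf (m k : ℕ) (hm : 2 ≤ m) (hk : k ≠ 0) :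
    (Cm m k : ℂ) = ∑ n ∈ Finset.range k, ((Kf m (n+1) k).card : ℂ) := by
  rw [Cm_eq_SF_card m k hk, SF_fiberwise m k hm, Finset.sum_range_succ']
  rw [fiber_zero m k hm hk]
  push_cast
  rw [add_zero]
  apply Finset.sum_congr rfl
  intro n _
  rw [fiber_pos m (n+1) k hm (by omega)]

theorem term_zero : poch (q ^ m) (q ^ m) 0 * q ^ (m * 0) * (poch q q (m * 0))⁻¹ = 1 := by
  simp only [poch, mul_zero, Finset.range_zero, Finset.prod_empty, pow_zero, one_mul, mul_one]
  rw [← one_mul (1 : PowerSeries ℂ)⁻¹, PowerSeries.mul_inv_cancel]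
  simp

-- coordinate extraction
theorem apply_eq_coeff (φ : PowerSeries ℂ) (d : Unit →₀ ℕ) :
    φ d = (PowerSeries.coeff (d ())) φ := by
  have : d = Finsupp.single () (d ()) := (Finsupp.unique_single d)
  rw [PowerSeries.coeff]
  rw [MvPowerSeries.coeff_apply]
  conv_lhs => rw [this]

theorem hasSum_of_coeff {f : ℕ → PowerSeries ℂ} {g : PowerSeries ℂ}
    (h : ∀ k : ℕ, HasSum (fun n => (PowerSeries.coeff k) (f n)) ((PowerSeries.coeff k) g)) :
    HasSum f g := by
  apply Pi.hasSum.mpr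
  intro d
  have := h (d ())
  simpa only [← apply_eq_coeff] using this

theorem Cm_genfun (m : ℕ) (hm : 2 ≤ m) :
    ∑' n : ℕ, (Cm m n : PowerSeries ℂ) * q ^ n =
    ∑' n : ℕ, poch (q ^ m) (q ^ m) n * q ^ (m * n) * (poch q q (m * n))⁻¹ := by
  set L : PowerSeries ℂ := PowerSeries.mk (fun k => (Cm m k : ℂ)) with hL
  have h1 : HasSum (fun n => (Cm m n : PowerSeries ℂ) * q ^ n) L := by
    apply hasSum_of_coeff
    intro k
    have hco : ∀ n, (PowerSeries.coeff k) ((Cm m n : PowerSeries ℂ) * q ^ n)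
        = if n = k then (Cm m k : ℂ) else 0 := by
      intro n
      have : (Cm m n : PowerSeries ℂ) = PowerSeries.C ((Cm m n : ℕ) : ℂ) := by
        rw [map_natCast (PowerSeries.C (R := ℂ))]
      rw [this, q, PowerSeries.coeff_C_mul, PowerSeries.coeff_X_pow]
      by_cases h : n = k
      · subst h; simp
      · rw [if_neg (fun hh => h hh.symm), if_neg h, mul_zero]
    rw [hL]
    simp only [hco, PowerSeries.coeff_mk]
    exact hasSum_ite_eq k _
  have h2 : HasSum (fun n => poch (q ^ m) (q ^ m) n * q ^ (m * n) * (poch q q (m * n))⁻¹) L := by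
    apply hasSum_of_coeff
    intro k
    have hvanish : ∀ n ∉ Finset.range (k+1),
        (PowerSeries.coeff k) (poch (q ^ m) (q ^ m) n * q ^ (m * n) * (poch q q (m * n))⁻¹) = 0 := by
      intro n hn
      rw [Finset.mem_range, not_lt] at hn
      have hn1 : 1 ≤ n := by omega
      rw [coeff_term m n k hm hn1, Kf_empty_of_big m n k hm hn1 (by nlinarith)]
      simp
    have hfin : HasSum _ _ := hasSum_sum_of_ne_finset_zero hvanish
    convert hfin using 1
    rw [hL, PowerSeries.coeff_mk]
    rcases Nat.eq_zero_or_pos k with rfl | hk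
    · -- k = 0
      rw [Finset.sum_range_one, term_zero]
      simp [Cm]
    · rw [Finset.sum_range_succ']
      rw [term_zero, Cm_eq_sum_Kf m k hm (by omega)]
      have : (PowerSeries.coeff k) (1 : PowerSeries ℂ) = 0 := by
        rw [PowerSeries.coeff_one, if_neg (by omega)]
      rw [this, add_zero]
      apply Finset.sum_congr rfl
      intro n _
      rw [coeff_term m (n+1) k hm (by omega)]
  rw [h1.tsum_eq, h2.tsum_eq]
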